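/- Let q₁,…,qₙ be Laurent polynomials over a field of characteristic zero whose minimum degrees (exponents of lowest-order terms) e₁,…,eₙ are pairwise distinct. Then the Wronskian W(q₁,…,qₙ) is a Laurent polynomial whose minimum degree equals e₁+⋯+eₙ − C(n,2). -/

import Mathlib

open LaurentPolynomial

/-- Formal derivative of a Laurent polynomial. -/
noncomputable def lderiv {K : Type*} [CommRing K] (p : K[T;T⁻¹]) : K[T;T⁻¹] :=
  Finsupp.sum p.coeff fun k a => LaurentPolynomial.C (a * (k : K)) * LaurentPolynomial.T (k - 1)

/-- The Wronskian of Laurent polynomials: the determinant of the matrix whose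
`(i,j)` entry is the `i`-th derivative of `p j`. -/
noncomputable def lW {K : Type*} [CommRing K] {n : ℕ} (p : Fin n → K[T;T⁻¹]) : K[T;T⁻¹] :=
  Matrix.det (Matrix.of fun i j : Fin n => lderiv^[(i : ℕ)] (p j))

section aux
variable {K : Type*} [CommRing K]

lemma lderiv_apply (p : K[T;T⁻¹]) (m : ℤ) :
    (lderiv p).coeff m = p.coeff (m + 1) * ((m + 1 : ℤ) : K) := by
  rw [lderiv]
  simp_rw [← LaurentPolynomial.single_eq_C_mul_T]
  rw [AddMonoidAlgebra.coeff_finsuppSum, Finsupp.sum_apply, Finsupp.sum]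
  simp_rw [AddMonoidAlgebra.coeff_single, Finsupp.single_apply, sub_eq_iff_eq_add]
  rw [Finset.sum_ite_eq' p.coeff.support (m + 1) (fun k => p.coeff k * ((k : ℤ) : K))]
  by_cases h : m + 1 ∈ p.coeff.support
  · simp [h]
  · rw [if_neg h, Finsupp.notMem_support_iff.mp h, zero_mul]

lemma iter_lderiv (p : K[T;T⁻¹]) (E : ℤ) (hlow : ∀ k < E, p.coeff k = 0) (i : ℕ) :
    (∀ k < E - i, (lderiv^[i] p).coeff k = 0) ∧
    (lderiv^[i] p).coeff (E - i) = p.coeff E * ∏ t ∈ Finset.range i, ((E - t : ℤ) : K) := by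
  induction i with
  | zero => simpa using hlow
  | succ i ih =>
    constructor
    · intro k hk
      rw [Function.iterate_succ_apply', lderiv_apply, ih.1 (k + 1) (by push_cast at hk ⊢; omega),
        zero_mul]
    · rw [Function.iterate_succ_apply', lderiv_apply]
      have h1 : E - (i + 1 : ℕ) + 1 = E - i := by push_cast; ring
      rw [h1, ih.2, Finset.prod_range_succ]
      push_cast
      ring

lemma mul_low (p r : K[T;T⁻¹]) (a b : ℤ) (hp : ∀ k < a, p.coeff k = 0) (hr : ∀ k < b, r.coeff k = 0) :
    (∀ k < a + b, (p * r).coeff k = 0) ∧ (p * r).coeff (a + b) = p.coeff a * r.coeff b := by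
  have hmp : ∀ a₁ ∈ p.coeff.support, a ≤ a₁ := fun a₁ h1 =>
    le_of_not_gt fun hlt => (Finsupp.mem_support_iff.mp h1) (hp _ hlt)
  have hmr : ∀ a₂ ∈ r.coeff.support, b ≤ a₂ := fun a₂ h2 =>
    le_of_not_gt fun hlt => (Finsupp.mem_support_iff.mp h2) (hr _ hlt)
  have key : ∀ x : ℤ, (p * r).coeff x =
      ∑ a₁ ∈ p.coeff.support, ∑ a₂ ∈ r.coeff.support,
        if a₁ + a₂ = x then p.coeff a₁ * r.coeff a₂ else 0 := by
    intro x
    rw [AddMonoidAlgebra.coeff_mul]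
    rfl
  constructor
  · intro k hk
    rw [key]
    refine Finset.sum_eq_zero fun a₁ h1 => Finset.sum_eq_zero fun a₂ h2 => ?_
    have := hmp a₁ h1; have := hmr a₂ h2
    rw [if_neg (by omega)]
  · rw [key]
    by_cases hpa : a ∈ p.coeff.support
    · by_cases hrb : b ∈ r.coeff.support
      · rw [Finset.sum_eq_single_of_mem a hpa]
        · rw [Finset.sum_eq_single_of_mem b hrb]
          · rw [if_pos rfl]
          · intro a₂ h2 hne
            rw [if_neg (by omega)]
        · intro a₁ h1 hne
          refine Finset.sum_eq_zero fun a₂ h2 => ?_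
          have := hmp a₁ h1; have := hmr a₂ h2
          rw [if_neg (by omega)]
      · rw [Finsupp.notMem_support_iff.mp hrb, mul_zero]
        refine Finset.sum_eq_zero fun a₁ h1 => Finset.sum_eq_zero fun a₂ h2 => ?_
        have := hmp a₁ h1; have := hmr a₂ h2
        by_cases hc : a₁ + a₂ = a + b
        · have : a₂ = b := by omega
          exact absurd (this ▸ h2) hrb
        · rw [if_neg hc]
    · rw [Finsupp.notMem_support_iff.mp hpa, zero_mul]
      refine Finset.sum_eq_zero fun a₁ h1 => Finset.sum_eq_zero fun a₂ h2 => ?_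
      have := hmp a₁ h1; have := hmr a₂ h2
      by_cases hc : a₁ + a₂ = a + b
      · have : a₁ = a := by omega
        exact absurd (this ▸ h1) hpa
      · rw [if_neg hc]

lemma prod_low {ι : Type*} (s : Finset ι) (p : ι → K[T;T⁻¹]) (d : ι → ℤ)
    (h : ∀ i ∈ s, ∀ k < d i, (p i).coeff k = 0) :
    (∀ k < ∑ i ∈ s, d i, (∏ i ∈ s, p i).coeff k = 0) ∧
    (∏ i ∈ s, p i).coeff (∑ i ∈ s, d i) = ∏ i ∈ s, (p i).coeff (d i) := by
  induction s using Finset.cons_induction with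
  | empty =>
    constructor
    · intro k hk
      rw [Finset.prod_empty]
      rw [Finset.sum_empty] at hk
      rw [AddMonoidAlgebra.one_def, AddMonoidAlgebra.coeff_single, Finsupp.single_apply,
        if_neg (by omega)]
    · rw [Finset.prod_empty, Finset.sum_empty, Finset.prod_empty, AddMonoidAlgebra.one_def,
        AddMonoidAlgebra.coeff_single, Finsupp.single_apply, if_pos rfl]
  | cons a s ha ih =>
    have ih' := ih (fun i hi => h i (Finset.mem_cons_of_mem hi))
    have hm := mul_low (p a) (∏ i ∈ s, p i) (d a) (∑ i ∈ s, d i)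
      (h a (Finset.mem_cons_self a s)) ih'.1
    rw [Finset.prod_cons, Finset.sum_cons]
    exact ⟨hm.1, by rw [hm.2, ih'.2, Finset.prod_cons]⟩

end aux

theorem wronskian_laurent_min_degree
    {K : Type*} [Field K] [CharZero K] {n : ℕ} (q : Fin n → K[T;T⁻¹]) (e : Fin n → ℤ)
    (hq : ∀ i, q i ≠ 0) (he : ∀ i, (Finsupp.support (q i).coeff).min = (e i : WithTop ℤ))
    (hinj : Function.Injective e) :
    lW q ≠ 0 ∧
      (Finsupp.support (lW q).coeff).min = ((∑ i, e i - n.choose 2 : ℤ) : WithTop ℤ) := by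
  set m : ℤ := ∑ i, e i - n.choose 2 with hm
  have hlow : ∀ i, ∀ k < e i, (q i).coeff k = 0 := by
    intro i k hk
    by_contra hne
    have hk' : k ∈ (q i).coeff.support := Finsupp.mem_support_iff.mpr hne
    have := Finset.min_le hk'
    rw [he i] at this
    exact absurd (WithTop.coe_le_coe.mp this) (not_le.mpr hk)
  have hc : ∀ i, (q i).coeff (e i) ≠ 0 := fun i =>
    Finsupp.mem_support_iff.mp (Finset.mem_of_min (he i))
  -- sum of indices
  have hidx : ∑ i : Fin n, ((i : ℕ) : ℤ) = (n.choose 2 : ℤ) := by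
    rw [Fin.sum_univ_eq_sum_range (fun i => ((i : ℕ) : ℤ)) n, ← Nat.cast_sum,
      Finset.sum_range_id, Nat.choose_two_right]
  have hsum : ∀ σ : Equiv.Perm (Fin n), ∑ i, (e i - ((σ i : ℕ) : ℤ)) = m := by
    intro σ
    rw [Finset.sum_sub_distrib, Equiv.sum_comp σ (fun i => ((i : ℕ) : ℤ)), hidx, hm]
  -- coefficient formula for lW
  have hlW : ∀ x : ℤ, (lW q).coeff x = ∑ σ : Equiv.Perm (Fin n),
      ((Equiv.Perm.sign σ : ℤ) : K) * ((∏ i, lderiv^[(σ i : ℕ)] (q i)).coeff x) := by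
    intro x
    rw [lW, Matrix.det_apply']
    simp_rw [Matrix.of_apply]
    rw [AddMonoidAlgebra.coeff_sum, Finsupp.finsetSum_apply]
    congr 1
    ext σ
    rw [show ((Equiv.Perm.sign σ : ℤ) : K[T;T⁻¹]) * (∏ i, lderiv^[(σ i : ℕ)] (q i))
        = (Equiv.Perm.sign σ : ℤ) • (∏ i, lderiv^[(σ i : ℕ)] (q i)) by
      rw [zsmul_eq_mul]]
    rw [AddMonoidAlgebra.coeff_smul_apply, zsmul_eq_mul]
  have hterm : ∀ σ : Equiv.Perm (Fin n),
      (∀ k < m, (∏ i, lderiv^[(σ i : ℕ)] (q i)).coeff k = 0) ∧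
      (∏ i, lderiv^[(σ i : ℕ)] (q i)).coeff m
        = ∏ i, ((q i).coeff (e i) * ∏ t ∈ Finset.range (σ i : ℕ), ((e i - t : ℤ) : K)) := by
    intro σ
    have h1 := prod_low Finset.univ (fun i => lderiv^[(σ i : ℕ)] (q i))
      (fun i => e i - (σ i : ℕ))
      (fun i _ => (iter_lderiv (q i) (e i) (hlow i) (σ i : ℕ)).1)
    rw [hsum σ] at h1
    refine ⟨h1.1, ?_⟩
    rw [h1.2]
    exact Finset.prod_congr rfl fun i _ => (iter_lderiv (q i) (e i) (hlow i) (σ i : ℕ)).2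
  -- low coefficients vanish
  have hvanish : ∀ k < m, (lW q).coeff k = 0 := by
    intro k hk
    rw [hlW]
    exact Finset.sum_eq_zero fun σ _ => by rw [(hterm σ).1 k hk, mul_zero]
  -- the coefficient at m
  have hval : (lW q).coeff m = (∏ i, (q i).coeff (e i)) *
      Matrix.det (Matrix.of fun i j : Fin n =>
        ∏ t ∈ Finset.range (i : ℕ), ((e j : K) - (t : ℕ))) := by
    rw [hlW, Matrix.det_apply', Finset.mul_sum]
    congr 1
    ext σ
    rw [(hterm σ).2]
    simp_rw [Matrix.of_apply]
    rw [Finset.prod_mul_distrib]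
    push_cast
    ring
  -- the determinant is a Vandermonde determinant
  have hvdm : Matrix.det (Matrix.of fun i j : Fin n =>
      ∏ t ∈ Finset.range (i : ℕ), ((e j : K) - (t : ℕ))) ≠ 0 := by
    set P : Fin n → Polynomial K := fun i =>
      ∏ t ∈ Finset.range (i : ℕ), (Polynomial.X - Polynomial.C (t : K)) with hP
    have hmonic : ∀ i, (P i).Monic := fun i =>
      Polynomial.monic_prod_of_monic _ _ fun t _ => Polynomial.monic_X_sub_C _
    have hdeg : ∀ i : Fin n, (P i).natDegree = (i : ℕ) := by
      intro i
      rw [hP, Polynomial.natDegree_prod_of_monic _ _ fun t _ => Polynomial.monic_X_sub_C _]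
      simp only [Polynomial.natDegree_X_sub_C]
      rw [Finset.sum_const, smul_eq_mul, mul_one, Finset.card_range]
    have heval : ∀ (i j : Fin n),
        (P i).eval ((e j : K)) = ∏ t ∈ Finset.range (i : ℕ), ((e j : K) - (t : ℕ)) := by
      intro i j
      rw [hP, Polynomial.eval_prod]
      exact Finset.prod_congr rfl fun t _ => by
        rw [Polynomial.eval_sub, Polynomial.eval_X, Polynomial.eval_C]
    have htr : Matrix.det (Matrix.of fun i j : Fin n =>
        ∏ t ∈ Finset.range (i : ℕ), ((e j : K) - (t : ℕ)))
        = Matrix.det (Matrix.of fun i j : Fin n => (P j).eval ((e i : K))) := by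
      rw [← Matrix.det_transpose (Matrix.of fun i j : Fin n => (P j).eval ((e i : K)))]
      congr 1
      ext i j
      rw [Matrix.transpose_apply, Matrix.of_apply, Matrix.of_apply, heval i j]
    rw [htr, ← Matrix.det_eval_matrixOfPolynomials_eq_det_vandermonde _ P hdeg hmonic]
    rw [Matrix.det_vandermonde_ne_zero_iff]
    exact fun a b hab => hinj (Int.cast_injective hab)
  have hcoeff : (lW q).coeff m ≠ 0 := by
    rw [hval]
    exact mul_ne_zero (Finset.prod_ne_zero_iff.mpr fun i _ => hc i) hvdm
  have hmem : m ∈ (lW q).coeff.support := Finsupp.mem_support_iff.mpr hcoeff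
  constructor
  · intro h0
    rw [h0] at hcoeff
    exact hcoeff rfl
  · refine le_antisymm (Finset.min_le hmem) (Finset.le_min fun k hk => ?_)
    rw [WithTop.coe_le_coe]
    by_contra hlt
    exact (Finsupp.mem_support_iff.mp hk) (hvanish k (by omega))
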